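/- Let c : V → [0,1] be vertex weights on a finite set, T ⊆ V with |T| = n′, and let k ≤ n′/12 be a positive integer. Let S be a uniformly random subset of T of size k. Then with probability at least 1 − 1/n (where n ≥ |V|), for every vertex x of a graph H on V, ∑_{y ∈ N(x) ∩ S} c_y ≤ (4k/n′)·∑_{y ∈ N(x)∖S} c_y + 2·log n. -/

import Mathlib

open Finset

private lemma aux_choose (n' k : ℕ) (hk : k ≤ n') : ∀ r, r ≤ k →
    (n' - r).choose (k - r) * n' ^ r ≤ n'.choose k * k ^ r := by
  intro r
  induction r with
  | zero => simp
  | succ r ih =>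
    intro hr
    have hr' : r ≤ k := by omega
    have h1 : r < k := by omega
    have h2 : r < n' := by omega
    have key : (n' - r) * ((n' - (r+1)).choose (k - (r+1))) =
        (n' - r).choose (k - r) * (k - r) := by
      have h := Nat.add_one_mul_choose_eq (n' - r - 1) (k - r - 1)
      have e1 : n' - r - 1 + 1 = n' - r := by omega
      have e2 : k - r - 1 + 1 = k - r := by omega
      have e3 : n' - (r+1) = n' - r - 1 := by omega
      have e4 : k - (r+1) = k - r - 1 := by omega
      rw [e1, e2] at h
      rw [e3, e4, h]
    have hmul : (k - r) * n' ≤ (n' - r) * k := by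
      have h3 : r * k ≤ r * n' := Nat.mul_le_mul_left r hk
      calc (k - r) * n' = k * n' - r * n' := Nat.sub_mul _ _ _
        _ ≤ k * n' - r * k := Nat.sub_le_sub_left h3 _
        _ = n' * k - r * k := by rw [Nat.mul_comm k n']
        _ = (n' - r) * k := (Nat.sub_mul _ _ _).symm
    have main : (n' - r) * ((n' - (r+1)).choose (k - (r+1)) * n' ^ (r+1)) ≤
        (n' - r) * (n'.choose k * k ^ (r+1)) := by
      calc (n' - r) * ((n' - (r+1)).choose (k - (r+1)) * n' ^ (r+1))
          = ((n' - r) * (n' - (r+1)).choose (k - (r+1))) * n' ^ (r+1) := by ring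
        _ = ((n' - r).choose (k - r) * (k - r)) * n' ^ (r+1) := by rw [key]
        _ = ((k - r) * n') * ((n' - r).choose (k - r) * n' ^ r) := by ring
        _ ≤ ((k - r) * n') * (n'.choose k * k ^ r) :=
            Nat.mul_le_mul_left _ (ih hr')
        _ ≤ ((n' - r) * k) * (n'.choose k * k ^ r) :=
            Nat.mul_le_mul_right _ hmul
        _ = (n' - r) * (n'.choose k * k ^ (r+1)) := by ring
    exact Nat.le_of_mul_le_mul_left main (by omega)

private lemma card_filter_superset {V : Type*} [DecidableEq V]
    (T R : Finset V) (k : ℕ) (hR : R ⊆ T) (hr : R.card ≤ k) :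
    ((T.powersetCard k).filter fun S => R ⊆ S).card = (T.card - R.card).choose (k - R.card) := by
  rw [← Finset.card_sdiff_of_subset hR, ← Finset.card_powersetCard]
  refine Finset.card_bij' (fun S _ => S \ R) (fun U _ => U ∪ R) ?_ ?_ ?_ ?_
  · intro S hS
    simp only [mem_filter, mem_powersetCard] at hS
    obtain ⟨⟨hST, hScard⟩, hRS⟩ := hS
    rw [mem_powersetCard]
    exact ⟨sdiff_subset_sdiff hST le_rfl, by rw [Finset.card_sdiff_of_subset hRS, hScard]⟩
  · intro U hU
    rw [mem_powersetCard] at hU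
    obtain ⟨hUT, hUcard⟩ := hU
    have hdisj : Disjoint U R := Finset.disjoint_of_subset_left hUT Finset.sdiff_disjoint
    simp only [mem_filter, mem_powersetCard]
    refine ⟨⟨Finset.union_subset (hUT.trans (Finset.sdiff_subset)) hR, ?_⟩,
      Finset.subset_union_right⟩
    rw [Finset.card_union_of_disjoint hdisj, hUcard]
    omega
  · intro S hS
    simp only [mem_filter, mem_powersetCard] at hS
    exact Finset.sdiff_union_of_subset hS.2
  · intro U hU
    rw [mem_powersetCard] at hU
    have hdisj : Disjoint U R := Finset.disjoint_of_subset_left hU.1 Finset.sdiff_disjoint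
    show (U ∪ R) \ R = U
    rw [Finset.union_sdiff_right, Finset.sdiff_eq_self_of_disjoint hdisj]

/-- Counting form of the MGF bound after Hoeffding-style reduction. -/
private lemma mgf_count {V : Type*} [DecidableEq V]
    (T : Finset V) (n' k : ℕ) (hT : T.card = n') (hn' : 0 < n') (hk : k ≤ n')
    (g : V → ℝ) (hg : ∀ y ∈ T, 0 ≤ g y) :
    ∑ S ∈ T.powersetCard k, ∏ y ∈ S, (g y + 1) ≤
      ((T.powersetCard k).card : ℝ) * ∏ y ∈ T, ((k : ℝ) / n' * g y + 1) := by
  classical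
  have hp0 : (0:ℝ) ≤ (k:ℝ)/n' := by positivity
  have step1 : ∀ S ∈ T.powersetCard k, ∏ y ∈ S, (g y + 1) =
      ∑ R ∈ S.powerset, ∏ y ∈ R, g y := by
    intro S _
    rw [Finset.prod_add]
    simp
  rw [Finset.sum_congr rfl step1]
  have swap : ∑ S ∈ T.powersetCard k, ∑ R ∈ S.powerset, ∏ y ∈ R, g y =
      ∑ R ∈ T.powerset, ∑ S ∈ (T.powersetCard k).filter (fun S => R ⊆ S), ∏ y ∈ R, g y := by
    refine Finset.sum_comm' ?_
    intro S R
    simp only [mem_powerset, mem_filter, mem_powersetCard]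
    exact ⟨fun h => ⟨⟨h.1, h.2⟩, h.2.trans h.1.1⟩, fun h => h.1⟩
  rw [swap]
  have key : ∀ R ∈ T.powerset,
      ∑ S ∈ (T.powersetCard k).filter (fun S => R ⊆ S), ∏ y ∈ R, g y ≤
      ((T.powersetCard k).card : ℝ) * ∏ y ∈ R, ((k:ℝ)/n' * g y) := by
    intro R hR
    rw [mem_powerset] at hR
    have hgR : (0:ℝ) ≤ ∏ y ∈ R, g y := Finset.prod_nonneg fun y hy => hg y (hR hy)
    have hprod : ∏ y ∈ R, ((k:ℝ)/n' * g y) = ((k:ℝ)/n')^R.card * ∏ y ∈ R, g y := by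
      rw [Finset.prod_mul_distrib, Finset.prod_const]
    have hcount : ((((T.powersetCard k).filter (fun S => R ⊆ S)).card : ℕ) : ℝ) ≤
        ((k:ℝ)/n')^R.card * ((T.powersetCard k).card : ℝ) := by
      by_cases hrk : R.card ≤ k
      · rw [card_filter_superset T R k hR hrk, Finset.card_powersetCard, hT]
        have hcast : ((n' - R.card).choose (k - R.card) : ℝ) * (n':ℝ)^R.card ≤
            (n'.choose k : ℝ) * (k:ℝ)^R.card := by
          exact_mod_cast aux_choose n' k hk R.card hrk
        have hnpos : (0:ℝ) < (n':ℝ)^R.card := by positivity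
        rw [div_pow, div_mul_eq_mul_div, le_div_iff₀ hnpos]
        calc ((n' - R.card).choose (k - R.card) : ℝ) * (n':ℝ)^R.card
            ≤ (n'.choose k : ℝ) * (k:ℝ)^R.card := hcast
          _ = (k:ℝ)^R.card * (n'.choose k : ℝ) := mul_comm _ _
      · have hemp : (T.powersetCard k).filter (fun S => R ⊆ S) = ∅ := by
          apply Finset.filter_false_of_mem
          intro S hS hRS
          rw [mem_powersetCard] at hS
          exact hrk ((Finset.card_le_card hRS).trans_eq hS.2)
        rw [hemp]
        simp only [Finset.card_empty, Nat.cast_zero]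
        positivity
    rw [Finset.sum_const, nsmul_eq_mul, hprod]
    calc ((((T.powersetCard k).filter (fun S => R ⊆ S)).card : ℕ) : ℝ) * ∏ y ∈ R, g y
        ≤ (((k:ℝ)/n')^R.card * ((T.powersetCard k).card : ℝ)) * ∏ y ∈ R, g y :=
          mul_le_mul_of_nonneg_right hcount hgR
      _ = ((T.powersetCard k).card : ℝ) * (((k:ℝ)/n')^R.card * ∏ y ∈ R, g y) := by ring
  calc ∑ R ∈ T.powerset, ∑ S ∈ (T.powersetCard k).filter (fun S => R ⊆ S), ∏ y ∈ R, g y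
      ≤ ∑ R ∈ T.powerset, ((T.powersetCard k).card : ℝ) * ∏ y ∈ R, ((k:ℝ)/n' * g y) :=
        Finset.sum_le_sum key
    _ = ((T.powersetCard k).card : ℝ) * ∑ R ∈ T.powerset, ∏ y ∈ R, ((k:ℝ)/n' * g y) := by
        rw [Finset.mul_sum]
    _ = ((T.powersetCard k).card : ℝ) * ∏ y ∈ T, ((k:ℝ)/n' * g y + 1) := by
        rw [Finset.prod_add]
        simp


private lemma exp_convex_aux (t : ℝ) (h0 : 0 ≤ t) (h1 : t ≤ 1) :
    Real.exp ((3/2) * t) ≤ 1 + t * (Real.exp (3/2) - 1) := by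
  have h := convexOn_exp.2 (Set.mem_univ (0:ℝ)) (Set.mem_univ (3/2:ℝ))
    (by linarith : (0:ℝ) ≤ 1 - t) h0 (by ring)
  simp only [smul_eq_mul, mul_zero, zero_add, Real.exp_zero] at h
  have he : (3/2) * t = (1 - t) * 0 + t * (3/2) := by ring
  rw [he]
  simp only [mul_zero, zero_add] at h ⊢
  nlinarith [h]

private lemma exp_three_halves_lt : Real.exp (3/2) < 11/2 := by
  have h1 : Real.exp 1 < 2.7182818286 := Real.exp_one_lt_d9
  have h3 : Real.exp (3:ℕ) = (Real.exp 1) ^ (3:ℕ) := by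
    rw [← Real.exp_nat_mul]; norm_num
  have hsq : Real.exp (3/2) ^ (2:ℕ) = Real.exp (3:ℕ) := by
    rw [← Real.exp_nat_mul]; norm_num
  have hb : (0:ℝ) < Real.exp 1 := Real.exp_pos 1
  have h13 : Real.exp 1 ^ 3 < (2.7182818286:ℝ) ^ 3 :=
    pow_lt_pow_left₀ h1 hb.le (by norm_num)
  have hlt : Real.exp (3/2) ^ 2 < (11/2:ℝ) ^ 2 := by
    rw [hsq, h3]
    nlinarith [h13]
  exact lt_of_pow_lt_pow_left₀ 2 (by norm_num) hlt

private lemma chernoff_x {V : Type*} [DecidableEq V]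
    (c : V → ℝ) (hc : ∀ v, c v ∈ Set.Icc (0 : ℝ) 1)
    (T : Finset V) (n' : ℕ) (hT : T.card = n')
    (k : ℕ) (hk : 1 ≤ k) (hk12 : (k : ℝ) ≤ (n' : ℝ) / 12)
    (n : ℕ) (hn2 : 2 ≤ n) (A : Finset V) :
    (((T.powersetCard k).filter fun S => ¬ (∑ y ∈ A ∩ S, c y ≤
        (4 * (k : ℝ) / (n' : ℝ)) * ∑ y ∈ A \ S, c y + 2 * Real.log (n : ℝ))).card : ℝ) ≤
      ((T.powersetCard k).card : ℝ) * Real.exp (-(9/4) * Real.log n) := by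
  classical
  have hn'12 : (12:ℝ) ≤ (n' : ℝ) := by
    have : (1:ℝ) ≤ (k:ℝ) := by exact_mod_cast hk
    linarith
  have hn'pos : (0:ℝ) < (n' : ℝ) := by linarith
  have hkn : k ≤ n' := by
    have : (k:ℝ) ≤ (n':ℝ) := by linarith
    exact_mod_cast this
  have hn'posn : 0 < n' := by exact_mod_cast hn'pos
  set p : ℝ := (k:ℝ) / (n':ℝ) with hp_def
  have hp0 : 0 ≤ p := by positivity
  have hp : p ≤ 1/12 := by
    rw [hp_def, div_le_iff₀ hn'pos]; linarith
  set L : ℝ := Real.log n with hL_def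
  have hL : 0 ≤ L := Real.log_nonneg (by exact_mod_cast Nat.one_le_of_lt hn2)
  set W : ℝ := ∑ y ∈ A ∩ T, c y with hW_def
  have hW : 0 ≤ W := Finset.sum_nonneg fun y _ => (hc y).1
  set m : ℝ := 3 * p * W + (3/2) * L with hm_def
  clear_value m
  -- reduction: every bad S has heavy weighted intersection
  have reduce : ∀ S ∈ (T.powersetCard k).filter (fun S => ¬ (∑ y ∈ A ∩ S, c y ≤
      (4 * (k : ℝ) / (n' : ℝ)) * ∑ y ∈ A \ S, c y + 2 * Real.log (n : ℝ))),
      m < ∑ y ∈ A ∩ S, c y := by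
    intro S hS
    rw [Finset.mem_filter] at hS
    obtain ⟨hSmem, hSbad⟩ := hS
    rw [Finset.mem_powersetCard] at hSmem
    push_neg at hSbad
    set X : ℝ := ∑ y ∈ A ∩ S, c y with hX_def
    set D : ℝ := ∑ y ∈ A \ S, c y with hD_def
    have hX0 : 0 ≤ X := Finset.sum_nonneg fun y _ => (hc y).1
    have hsub : A ∩ S ⊆ A ∩ T := Finset.inter_subset_inter le_rfl hSmem.1
    have hWX : W - X = ∑ y ∈ (A ∩ T) \ (A ∩ S), c y := by
      rw [Finset.sum_sdiff_eq_sub hsub]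
    have hsub2 : (A ∩ T) \ (A ∩ S) ⊆ A \ S := by
      intro y hy
      simp only [Finset.mem_sdiff, Finset.mem_inter] at hy ⊢
      exact ⟨hy.1.1, fun hyS => hy.2 ⟨hy.1.1, hyS⟩⟩
    have hD : W - X ≤ D := by
      rw [hWX]
      exact Finset.sum_le_sum_of_subset_of_nonneg hsub2 fun y _ _ => (hc y).1
    have h4p : 4 * (k : ℝ) / (n' : ℝ) = 4 * p := by rw [hp_def]; ring
    rw [h4p, ← hL_def] at hSbad
    -- X > 4p·D + 2L ≥ 4p(W−X) + 2L, and 4p ≤ 1/3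
    nlinarith [hSbad, mul_le_mul_of_nonneg_left hD (by linarith : (0:ℝ) ≤ 4 * p),
      mul_le_mul_of_nonneg_right hp hX0, hL, hW, hp0, hX0]
  -- Chernoff bound
  set g : V → ℝ := fun y => if y ∈ A then Real.exp ((3/2) * c y) - 1 else 0 with hg_def
  have hg0 : ∀ y ∈ T, 0 ≤ g y := by
    intro y _
    rw [hg_def]
    dsimp only
    split_ifs with h
    · have h1 : (1:ℝ) ≤ Real.exp ((3/2) * c y) :=
        Real.one_le_exp (by nlinarith [(hc y).1])
      linarith
    · exact le_refl 0
  have hg1 : ∀ y, g y + 1 = Real.exp (if y ∈ A then (3/2) * c y else 0) := by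
    intro y
    rw [hg_def]
    dsimp only
    split_ifs with h
    · ring
    · rw [Real.exp_zero]; ring
  -- each bad S contributes at most exp((3/2)(X S − m))
  have hcontrib : ∀ S ∈ (T.powersetCard k).filter (fun S => ¬ (∑ y ∈ A ∩ S, c y ≤
      (4 * (k : ℝ) / (n' : ℝ)) * ∑ y ∈ A \ S, c y + 2 * Real.log (n : ℝ))),
      (1:ℝ) ≤ Real.exp ((3/2) * ((∑ y ∈ A ∩ S, c y) - m)) := by
    intro S hS
    exact Real.one_le_exp (by nlinarith [reduce S hS])
  have hexpX : ∀ S : Finset V, Real.exp ((3/2) * ∑ y ∈ A ∩ S, c y) =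
      ∏ y ∈ S, (g y + 1) := by
    intro S
    have hsum : (3/2) * ∑ y ∈ A ∩ S, c y =
        ∑ y ∈ S, (if y ∈ A then (3/2) * c y else 0) := by
      rw [← Finset.sum_filter, Finset.filter_mem_eq_inter, Finset.inter_comm,
        Finset.mul_sum]
    rw [hsum, Real.exp_sum]
    exact Finset.prod_congr rfl fun y _ => (hg1 y).symm
  -- main chain
  have hstep1 : (((T.powersetCard k).filter fun S => ¬ (∑ y ∈ A ∩ S, c y ≤
      (4 * (k : ℝ) / (n' : ℝ)) * ∑ y ∈ A \ S, c y + 2 * Real.log (n : ℝ))).card : ℝ) ≤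
      Real.exp (-(3/2) * m) * ∑ S ∈ T.powersetCard k, ∏ y ∈ S, (g y + 1) := by
    rw [Finset.mul_sum]
    calc (((T.powersetCard k).filter fun S => ¬ (∑ y ∈ A ∩ S, c y ≤
        (4 * (k : ℝ) / (n' : ℝ)) * ∑ y ∈ A \ S, c y + 2 * Real.log (n : ℝ))).card : ℝ)
        = ∑ _S ∈ (T.powersetCard k).filter (fun S => ¬ (∑ y ∈ A ∩ S, c y ≤
          (4 * (k : ℝ) / (n' : ℝ)) * ∑ y ∈ A \ S, c y + 2 * Real.log (n : ℝ))), (1:ℝ) := by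
          rw [Finset.sum_const, nsmul_eq_mul, mul_one]
      _ ≤ ∑ S ∈ (T.powersetCard k).filter (fun S => ¬ (∑ y ∈ A ∩ S, c y ≤
          (4 * (k : ℝ) / (n' : ℝ)) * ∑ y ∈ A \ S, c y + 2 * Real.log (n : ℝ))),
          Real.exp (-(3/2) * m) * ∏ y ∈ S, (g y + 1) := by
          refine Finset.sum_le_sum fun S hS => ?_
          have h1 := hcontrib S hS
          have h2 : Real.exp (-(3/2) * m) * ∏ y ∈ S, (g y + 1) =
              Real.exp ((3/2) * ((∑ y ∈ A ∩ S, c y) - m)) := by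
            rw [← hexpX, ← Real.exp_add]
            congr 1
            ring
          rw [h2]
          exact h1
      _ ≤ ∑ S ∈ T.powersetCard k, Real.exp (-(3/2) * m) * ∏ y ∈ S, (g y + 1) := by
          refine Finset.sum_le_sum_of_subset_of_nonneg (Finset.filter_subset _ _)
            fun S hS _ => ?_
          have : (0:ℝ) < Real.exp ((3/2) * ∑ y ∈ A ∩ S, c y) := Real.exp_pos _
          rw [hexpX] at this
          positivity
  -- apply the counting MGF bound
  have hstep2 : ∑ S ∈ T.powersetCard k, ∏ y ∈ S, (g y + 1) ≤
      ((T.powersetCard k).card : ℝ) * ∏ y ∈ T, (p * g y + 1) :=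
    mgf_count T n' k hT hn'posn hkn g hg0
  have hstep3 : ∏ y ∈ T, (p * g y + 1) ≤ Real.exp (p * ((Real.exp (3/2) - 1) * W)) := by
    have hsumg : ∑ y ∈ T, p * g y ≤ p * ((Real.exp (3/2) - 1) * W) := by
      rw [← Finset.mul_sum]
      refine mul_le_mul_of_nonneg_left ?_ hp0
      have he : ∑ y ∈ T, g y = ∑ y ∈ T ∩ A, (Real.exp ((3/2) * c y) - 1) := by
        rw [← Finset.filter_mem_eq_inter, Finset.sum_filter]
      rw [he]
      calc ∑ y ∈ T ∩ A, (Real.exp ((3/2) * c y) - 1)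
          ≤ ∑ y ∈ T ∩ A, (Real.exp (3/2) - 1) * c y := by
            refine Finset.sum_le_sum fun y _ => ?_
            have := exp_convex_aux (c y) (hc y).1 (hc y).2
            linarith
        _ = (Real.exp (3/2) - 1) * W := by
            rw [hW_def, ← Finset.mul_sum, Finset.inter_comm]
    calc ∏ y ∈ T, (p * g y + 1) ≤ ∏ y ∈ T, Real.exp (p * g y) := by
          refine Finset.prod_le_prod (fun y hy => ?_) (fun y hy => ?_)
          · have := hg0 y hy
            positivity
          · exact Real.add_one_le_exp _
      _ = Real.exp (∑ y ∈ T, p * g y) := (Real.exp_sum _ _).symm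
      _ ≤ Real.exp (p * ((Real.exp (3/2) - 1) * W)) := Real.exp_le_exp.mpr hsumg
  -- combine and do the numeric estimate
  have hC0 : (0:ℝ) ≤ ((T.powersetCard k).card : ℝ) := Nat.cast_nonneg _
  have hfin : Real.exp (-(3/2) * m) * (((T.powersetCard k).card : ℝ) *
      Real.exp (p * ((Real.exp (3/2) - 1) * W))) ≤
      ((T.powersetCard k).card : ℝ) * Real.exp (-(9/4) * L) := by
    rw [← mul_assoc, mul_comm (Real.exp (-(3/2) * m)), mul_assoc, ← Real.exp_add]
    refine mul_le_mul_of_nonneg_left (Real.exp_le_exp.mpr ?_) hC0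
    have hpW : 0 ≤ p * W := mul_nonneg hp0 hW
    have hexp32 : Real.exp (3/2) < 11/2 := exp_three_halves_lt
    rw [hm_def]
    nlinarith [hpW, hexp32, hL]
  calc (((T.powersetCard k).filter fun S => ¬ (∑ y ∈ A ∩ S, c y ≤
      (4 * (k : ℝ) / (n' : ℝ)) * ∑ y ∈ A \ S, c y + 2 * Real.log (n : ℝ))).card : ℝ)
      ≤ Real.exp (-(3/2) * m) * ∑ S ∈ T.powersetCard k, ∏ y ∈ S, (g y + 1) := hstep1
    _ ≤ Real.exp (-(3/2) * m) * (((T.powersetCard k).card : ℝ) *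
        ∏ y ∈ T, (p * g y + 1)) := by
        refine mul_le_mul_of_nonneg_left ?_ (Real.exp_pos _).le
        exact hstep2
    _ ≤ Real.exp (-(3/2) * m) * (((T.powersetCard k).card : ℝ) *
        Real.exp (p * ((Real.exp (3/2) - 1) * W))) := by
        refine mul_le_mul_of_nonneg_left (mul_le_mul_of_nonneg_left hstep3 hC0)
          (Real.exp_pos _).le
    _ ≤ ((T.powersetCard k).card : ℝ) * Real.exp (-(9/4) * L) := hfin

/-- For a uniformly random `k`-subset `S` of `T` (`|T| = n'`, `k ≤ n'/12`), with
probability at least `1 − 1/n` every vertex `x` satisfies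
`∑_{y ∈ N(x) ∩ S} c_y ≤ (4k/n')·∑_{y ∈ N(x)∖S} c_y + 2 log n`. -/
theorem stmt_9 (V : Type*) [Fintype V] [DecidableEq V]
    (H : SimpleGraph V) [DecidableRel H.Adj]
    (c : V → ℝ) (hc : ∀ v, c v ∈ Set.Icc (0 : ℝ) 1)
    (T : Finset V) (n' : ℕ) (hT : T.card = n')
    (k : ℕ) (hk : 1 ≤ k) (hk12 : (k : ℝ) ≤ (n' : ℝ) / 12)
    (n : ℕ) (hn : Fintype.card V ≤ n) (hV : 2 ≤ Fintype.card V) :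
    (1 - 1 / (n : ℝ)) * ((T.powersetCard k).card : ℝ) ≤
      (((T.powersetCard k).filter fun S => ∀ x : V,
        ∑ y ∈ H.neighborFinset x ∩ S, c y ≤
          (4 * (k : ℝ) / (n' : ℝ)) * ∑ y ∈ H.neighborFinset x \ S, c y +
            2 * Real.log (n : ℝ)).card : ℝ) := by
  classical
  have hn2 : 2 ≤ n := le_trans hV hn
  have hnpos : (0:ℝ) < (n:ℝ) := by
    have : 0 < n := by omega
    exact_mod_cast this
  set Q : V → Finset V → Prop := fun x S =>
    ∑ y ∈ H.neighborFinset x ∩ S, c y ≤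
      (4 * (k : ℝ) / (n' : ℝ)) * ∑ y ∈ H.neighborFinset x \ S, c y +
        2 * Real.log (n : ℝ) with hQ_def
  set pk := T.powersetCard k with hpk_def
  have hC0 : (0:ℝ) ≤ (pk.card : ℝ) := Nat.cast_nonneg _
  -- split into good and bad
  have hsplit : (pk.filter fun S => ∀ x : V, Q x S).card
      + (pk.filter fun S => ¬ ∀ x : V, Q x S).card = pk.card :=
    Finset.card_filter_add_card_filter_not _
  -- union bound over vertices
  have hbadsub : (pk.filter fun S => ¬ ∀ x : V, Q x S) ⊆
      Finset.univ.biUnion fun x : V => pk.filter fun S => ¬ Q x S := by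
    intro S hS
    rw [Finset.mem_filter] at hS
    obtain ⟨x, hx⟩ := not_forall.mp hS.2
    exact Finset.mem_biUnion.mpr ⟨x, Finset.mem_univ x,
      Finset.mem_filter.mpr ⟨hS.1, hx⟩⟩
  have hbad : ((pk.filter fun S => ¬ ∀ x : V, Q x S).card : ℝ) ≤
      ∑ x : V, ((pk.filter fun S => ¬ Q x S).card : ℝ) := by
    have h1 := Finset.card_le_card hbadsub
    have h2 := Finset.card_biUnion_le (s := (Finset.univ : Finset V))
      (t := fun x : V => pk.filter fun S => ¬ Q x S)
    have := le_trans h1 h2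
    exact_mod_cast this
  -- per-vertex Chernoff bound
  have hper : ∀ x : V, ((pk.filter fun S => ¬ Q x S).card : ℝ) ≤
      (pk.card : ℝ) * Real.exp (-(9/4) * Real.log n) := by
    intro x
    exact chernoff_x c hc T n' hT k hk hk12 n hn2 (H.neighborFinset x)
  have hsum : ∑ x : V, ((pk.filter fun S => ¬ Q x S).card : ℝ) ≤
      (Fintype.card V : ℝ) * ((pk.card : ℝ) * Real.exp (-(9/4) * Real.log n)) := by
    calc ∑ x : V, ((pk.filter fun S => ¬ Q x S).card : ℝ)
        ≤ ∑ _x : V, (pk.card : ℝ) * Real.exp (-(9/4) * Real.log n) :=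
          Finset.sum_le_sum fun x _ => hper x
      _ = (Fintype.card V : ℝ) * ((pk.card : ℝ) * Real.exp (-(9/4) * Real.log n)) := by
          rw [Finset.sum_const, nsmul_eq_mul, Finset.card_univ]
  -- numeric: |V| · exp(−(9/4)·log n) ≤ 1/n
  have hnum : (Fintype.card V : ℝ) * Real.exp (-(9/4) * Real.log n) ≤ 1 / n := by
    have hlogn : Real.exp (Real.log n) = (n:ℝ) := Real.exp_log hnpos
    have hL : 0 ≤ Real.log n := Real.log_nonneg (by exact_mod_cast Nat.one_le_of_lt hn2)
    have hmon : Real.exp (2 * Real.log n) ≤ Real.exp ((9/4) * Real.log n) :=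
      Real.exp_le_exp.mpr (by nlinarith)
    have h2 : Real.exp (2 * Real.log n) = (n:ℝ) * (n:ℝ) := by
      rw [two_mul, Real.exp_add, hlogn]
    have hVn : (Fintype.card V : ℝ) ≤ (n:ℝ) := by exact_mod_cast hn
    have hVpos : (0:ℝ) ≤ (Fintype.card V : ℝ) := Nat.cast_nonneg _
    have hge : (n:ℝ) * n ≤ Real.exp ((9/4) * Real.log n) := by rw [← h2]; exact hmon
    have hposn2 : (0:ℝ) < (n:ℝ) * n := by positivity
    have hinv : Real.exp (-(9/4) * Real.log n) ≤ 1 / ((n:ℝ) * n) := by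
      have heq : Real.exp (-(9/4) * Real.log n) = (Real.exp ((9/4) * Real.log n))⁻¹ := by
        rw [← Real.exp_neg]
        ring_nf
      rw [heq, one_div]
      exact inv_anti₀ hposn2 hge
    calc (Fintype.card V : ℝ) * Real.exp (-(9/4) * Real.log n)
        ≤ (n:ℝ) * (1/((n:ℝ)*n)) :=
          mul_le_mul hVn hinv (Real.exp_pos _).le (le_of_lt hnpos)
      _ = 1/n := by field_simp
  calc (1 - 1 / (n : ℝ)) * (pk.card : ℝ)
      = (pk.card : ℝ) - (pk.card : ℝ) * (1/n) := by ring
    _ ≤ (pk.card : ℝ) - ((pk.filter fun S => ¬ ∀ x : V, Q x S).card : ℝ) := by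
        have : ((pk.filter fun S => ¬ ∀ x : V, Q x S).card : ℝ) ≤ (pk.card : ℝ) * (1/n) := by
          calc ((pk.filter fun S => ¬ ∀ x : V, Q x S).card : ℝ)
              ≤ ∑ x : V, ((pk.filter fun S => ¬ Q x S).card : ℝ) := hbad
            _ ≤ (Fintype.card V : ℝ) * ((pk.card : ℝ) * Real.exp (-(9/4) * Real.log n)) := hsum
            _ = (pk.card : ℝ) * ((Fintype.card V : ℝ) * Real.exp (-(9/4) * Real.log n)) := by
                ring
            _ ≤ (pk.card : ℝ) * (1/n) := mul_le_mul_of_nonneg_left hnum hC0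
        linarith
    _ ≤ ((pk.filter fun S => ∀ x : V, Q x S).card : ℝ) := by
        have hcast : ((pk.filter fun S => ∀ x : V, Q x S).card : ℝ)
            + ((pk.filter fun S => ¬ ∀ x : V, Q x S).card : ℝ) = (pk.card : ℝ) := by
          exact_mod_cast hsplit
        linarith
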